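/- Let T, S be bounded linear operators on H admitting A-adjoints T♯, S♯ respectively. Then w_A(T∘S ± S∘T) ≤ 2√2 · ‖S‖_A · √( w_A(T)² − | ‖Re_A(T) + Im_A(T)‖_A² − ‖Re_A(T) − Im_A(T)‖_A² | / 4 ), for both choices of sign. -/

import Mathlib

noncomputable section

open Complex ContinuousLinearMap

variable {H : Type*} [NormedAddCommGroup H] [InnerProductSpace ℂ H] [CompleteSpace H]

/-- The `A`-inner product `⟨x, y⟩_A = ⟨A x, y⟩`. -/
def innA (A : H →L[ℂ] H) (x y : H) : ℂ := @inner ℂ _ _ (A x) y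

/-- The `A`-seminorm `‖x‖_A = √⟨A x, x⟩`. -/
def vnormA (A : H →L[ℂ] H) (x : H) : ℝ := Real.sqrt (innA A x x).re

/-- The `A`-operator seminorm `‖T‖_A = sup {‖T x‖_A : ‖x‖_A = 1}`. -/
def opnormA (A T : H →L[ℂ] H) : ℝ :=
  sSup {r : ℝ | ∃ x : H, vnormA A x = 1 ∧ r = vnormA A (T x)}

/-- The `A`-numerical radius `w_A(T) = sup {|⟨T x, x⟩_A| : ‖x‖_A = 1}`. -/
def wA (A T : H →L[ℂ] H) : ℝ :=
  sSup {r : ℝ | ∃ x : H, vnormA A x = 1 ∧ r = ‖innA A (T x) x‖}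

/-- The `A`-numerical range `W_A(T) = {⟨T x, x⟩_A : ‖x‖_A = 1}`. -/
def WA (A T : H →L[ℂ] H) : Set ℂ :=
  {z : ℂ | ∃ x : H, vnormA A x = 1 ∧ z = innA A (T x) x}

/-- `Re_A(T) = (T + T♯)/2`, given an `A`-adjoint `Ts` of `T`. -/
def ReA (T Ts : H →L[ℂ] H) : H →L[ℂ] H := (2 : ℂ)⁻¹ • (T + Ts)

/-- `Im_A(T) = (T - T♯)/(2i)`, given an `A`-adjoint `Ts` of `T`. -/
def ImA (T Ts : H →L[ℂ] H) : H →L[ℂ] H := (2 * Complex.I)⁻¹ • (T - Ts)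

/-- `Ts` is an `A`-adjoint of `T`, i.e. `A ∘ Ts = T* ∘ A`. -/
def IsAAdjoint (A T Ts : H →L[ℂ] H) : Prop :=
  A.comp Ts = (ContinuousLinearMap.adjoint T).comp A

set_option linter.unusedSectionVars false
set_option maxHeartbeats 1000000

variable {A : H →L[ℂ] H}

lemma innA_self_nonneg (hA : A.IsPositive) (x : H) : 0 ≤ (innA A x x).re := hA.2 x

lemma innA_conj (hA : A.IsPositive) (x y : H) :
    innA A y x = starRingEnd ℂ (innA A x y) := by
  unfold innA
  rw [← inner_conj_symm]
  congr 1
  calc @inner ℂ _ _ x (A y) = @inner ℂ _ _ (adjoint A x) y := (adjoint_inner_left A y x).symm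
  _ = @inner ℂ _ _ (A x) y := by rw [hA.isSelfAdjoint.adjoint_eq]

lemma innA_self_im (hA : A.IsPositive) (x : H) : (innA A x x).im = 0 := by
  have := innA_conj hA x x
  have h2 : (starRingEnd ℂ (innA A x x)).im = - (innA A x x).im := Complex.conj_im _
  rw [← this] at h2; linarith

lemma vnormA_sq (hA : A.IsPositive) (x : H) : vnormA A x ^ 2 = (innA A x x).re := by
  rw [vnormA, Real.sq_sqrt (innA_self_nonneg hA x)]

lemma vnormA_nonneg (x : H) : 0 ≤ vnormA A x := Real.sqrt_nonneg _

lemma innA_add_left (x y z : H) : innA A (x + y) z = innA A x z + innA A y z := by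
  simp [innA, inner_add_left]
lemma innA_add_right (x y z : H) : innA A x (y + z) = innA A x y + innA A x z := by
  simp [innA, inner_add_right]
lemma innA_smul_left (c : ℂ) (x z : H) : innA A (c • x) z = starRingEnd ℂ c * innA A x z := by
  simp [innA, inner_smul_left, mul_comm]
lemma innA_smul_right (c : ℂ) (x z : H) : innA A x (c • z) = c * innA A x z := by
  simp [innA, inner_smul_right]
lemma innA_sub_left (x y z : H) : innA A (x - y) z = innA A x z - innA A y z := by
  simp [innA, inner_sub_left]
lemma innA_sub_right (x y z : H) : innA A x (y - z) = innA A x y - innA A x z := by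
  simp [innA, inner_sub_right]

-- Cauchy-Schwarz
lemma innA_abs_le (hA : A.IsPositive) (x y : H) :
    ‖innA A x y‖ ≤ vnormA A x * vnormA A y := by
  rcases eq_or_ne (innA A x y) 0 with h | h
  · simp [h]; exact mul_nonneg (vnormA_nonneg x) (vnormA_nonneg y)
  · set z := innA A x y with hz
    set c : ℂ := starRingEnd ℂ z / (‖z‖ : ℂ) with hc
    have habs : (‖z‖ : ℝ) ≠ 0 := by simpa using h
    have hcz : c * z = (‖z‖ : ℂ) := by
      rw [hc, div_mul_eq_mul_div, mul_comm, Complex.mul_conj, Complex.normSq_eq_norm_sq]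
      push_cast
      rw [sq]
      field_simp
    have hc1 : ‖c‖ = 1 := by
      rw [hc, norm_div, Complex.norm_conj, Complex.norm_real, Real.norm_eq_abs,
        _root_.abs_of_nonneg (norm_nonneg z)]
      field_simp
    have hcc : starRingEnd ℂ c * c = 1 := by
      rw [mul_comm, Complex.mul_conj, Complex.normSq_eq_norm_sq, hc1]
      norm_num
    have h3 : starRingEnd ℂ c * starRingEnd ℂ z = (‖z‖ : ℂ) := by
      rw [← map_mul, hcz]
      exact Complex.conj_ofReal _
    have key : ∀ t : ℝ, 0 ≤ (innA A x x).re * (t * t)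
        + (2 * ‖z‖) * t + (innA A y y).re := by
      intro t
      have h0 := innA_self_nonneg hA ((t : ℂ) • x + c • y)
      have hexp : innA A ((t:ℂ) • x + c • y) ((t:ℂ) • x + c • y)
          = ((t*t : ℝ) : ℂ) * innA A x x + ((2*t*‖z‖ : ℝ) : ℂ) + innA A y y := by
        simp only [innA_add_left, innA_add_right, innA_smul_left, innA_smul_right,
          Complex.conj_ofReal]
        rw [innA_conj hA x y, ← hz]
        push_cast
        linear_combination (t:ℂ) * hcz + (t:ℂ) * h3 + (innA A y y) * hcc
      rw [hexp] at h0
      simp only [Complex.add_re, Complex.re_ofReal_mul, Complex.ofReal_re] at h0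
      linarith
    have hd := discrim_le_zero key
    rw [discrim] at hd
    have h1 : ‖z‖ ^ 2 ≤ (innA A x x).re * (innA A y y).re := by nlinarith
    have h2 := Real.sqrt_le_sqrt h1
    rw [Real.sqrt_sq (norm_nonneg _)] at h2
    calc ‖z‖ ≤ Real.sqrt ((innA A x x).re * (innA A y y).re) := h2
      _ = vnormA A x * vnormA A y := by rw [Real.sqrt_mul (innA_self_nonneg hA x), vnormA, vnormA]


-- new part
lemma re_innA_le (hA : A.IsPositive) (x y : H) :
    (innA A x y).re ≤ vnormA A x * vnormA A y :=
  (Complex.re_le_norm _).trans (innA_abs_le hA x y)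

lemma vnormA_add_le (hA : A.IsPositive) (x y : H) :
    vnormA A (x + y) ≤ vnormA A x + vnormA A y := by
  have h1 : (innA A (x+y) (x+y)).re
      = (innA A x x).re + 2 * (innA A x y).re + (innA A y y).re := by
    rw [innA_add_left, innA_add_right, innA_add_right]
    have hc := innA_conj hA x y
    simp only [Complex.add_re, hc, Complex.conj_re]
    ring
  have h2 : (innA A (x+y) (x+y)).re ≤ (vnormA A x + vnormA A y)^2 := by
    rw [h1, ← vnormA_sq hA x, ← vnormA_sq hA y]
    nlinarith [re_innA_le hA x y]
  have := Real.sqrt_le_sqrt h2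
  rwa [Real.sqrt_sq (add_nonneg (vnormA_nonneg x) (vnormA_nonneg y))] at this

lemma vnormA_smul (hA : A.IsPositive) (c : ℂ) (x : H) :
    vnormA A (c • x) = ‖c‖ * vnormA A x := by
  have h1 : innA A (c • x) (c • x) = ((‖c‖ ^2 : ℝ) : ℂ) * innA A x x := by
    rw [innA_smul_left, innA_smul_right, ← mul_assoc, mul_comm (starRingEnd ℂ c) c,
      Complex.mul_conj, Complex.normSq_eq_norm_sq]
  unfold vnormA
  rw [h1, Complex.re_ofReal_mul, Real.sqrt_mul (by positivity), Real.sqrt_sq (norm_nonneg c)]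

lemma vnormA_le_norm (hA : A.IsPositive) (x : H) :
    vnormA A x ≤ Real.sqrt ‖A‖ * ‖x‖ := by
  have h1 : (innA A x x).re ≤ ‖A‖ * ‖x‖^2 := by
    have h0 : ‖innA A x x‖ ≤ ‖A x‖ * ‖x‖ := by
      exact norm_inner_le_norm _ _
    have := (Complex.re_le_norm (innA A x x)).trans h0
    have h2 : ‖A x‖ ≤ ‖A‖ * ‖x‖ := A.le_opNorm x
    nlinarith [norm_nonneg (A x), norm_nonneg x, norm_nonneg A]
  have := Real.sqrt_le_sqrt h1
  rwa [Real.sqrt_mul (norm_nonneg A), Real.sqrt_sq (norm_nonneg x)] at this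

-- A-selfadjointness basics
lemma isAAdjoint_symm (hA : A.IsPositive) {T Ts : H →L[ℂ] H} (h : IsAAdjoint A T Ts) :
    IsAAdjoint A Ts T := by
  unfold IsAAdjoint at *
  have := congrArg (fun f => adjoint f) h
  rw [adjoint_comp, adjoint_comp, adjoint_adjoint, hA.isSelfAdjoint.adjoint_eq] at this
  exact this.symm

lemma isAAdjoint_apply (hA : A.IsPositive) {T Ts : H →L[ℂ] H} (h : IsAAdjoint A T Ts)
    (x y : H) : innA A (T x) y = innA A x (Ts y) := by
  unfold innA
  have h1 : A (T x) = (adjoint Ts) (A x) := by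
    have := congrArg (fun f => f x) (isAAdjoint_symm hA h); simpa using this
  rw [h1, adjoint_inner_left]


-- part 3
lemma vnormA_zero : vnormA A (0 : H) = 0 := by simp [vnormA, innA]

lemma isAAdjoint_mul (hA : A.IsPositive) {T Ts : H →L[ℂ] H} (h : IsAAdjoint A T Ts) :
    A * T = adjoint Ts * A := isAAdjoint_symm hA h

lemma isAAdjoint_pow (hA : A.IsPositive) {R : H →L[ℂ] H} (hR : IsAAdjoint A R R) (n : ℕ) :
    IsAAdjoint A (R ^ n) (R ^ n) := by
  induction n with
  | zero =>
    show A * R ^ 0 = adjoint (R ^ 0) * A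
    rw [pow_zero, ← star_eq_adjoint, star_one, mul_one, one_mul]
  | succ n ih =>
    show A * R ^ (n+1) = adjoint (R ^ (n+1)) * A
    have h1 : A * R = adjoint R * A := hR
    have h2 : A * R ^ n = adjoint (R ^ n) * A := ih
    calc A * R ^ (n+1) = (A * R ^ n) * R := by rw [pow_succ, mul_assoc]
    _ = adjoint (R ^ n) * (A * R) := by rw [h2, mul_assoc]
    _ = adjoint (R ^ n) * (adjoint R * A) := by rw [h1]
    _ = (adjoint (R ^ n) * adjoint R) * A := by rw [mul_assoc]
    _ = adjoint (R ^ (n+1)) * A := by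
        rw [← star_eq_adjoint, ← star_eq_adjoint, ← star_eq_adjoint, ← star_mul, pow_succ']

lemma key1 (hA : A.IsPositive) {R : H →L[ℂ] H} (hR : IsAAdjoint A R R) (x : H) :
    vnormA A (R x) ^ 2 ≤ vnormA A ((R * R) x) * vnormA A x := by
  rw [vnormA_sq hA]
  have h1 : innA A (R x) (R x) = innA A x ((R * R) x) := by
    rw [isAAdjoint_apply hA hR x (R x)]; rfl
  rw [h1]
  exact (re_innA_le hA x _).trans (by rw [mul_comm])

lemma key2 (hA : A.IsPositive) {R : H →L[ℂ] H} (hR : IsAAdjoint A R R) (n : ℕ) (x : H) :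
    vnormA A (R x) ^ (2 ^ n) ≤ vnormA A ((R ^ (2 ^ n)) x) * vnormA A x ^ (2 ^ n - 1) := by
  induction n with
  | zero => simp
  | succ n ih =>
    have hm : 1 ≤ 2 ^ n := Nat.one_le_two_pow
    have e1 : vnormA A (R x) ^ 2 ^ (n+1) = (vnormA A (R x) ^ 2 ^ n) ^ 2 := by
      rw [← pow_mul, pow_succ]
    have step : vnormA A ((R ^ 2 ^ n) x) ^ 2 ≤ vnormA A ((R ^ 2 ^ (n+1)) x) * vnormA A x := by
      have := key1 hA (isAAdjoint_pow hA hR (2 ^ n)) x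
      rwa [← pow_add, ← two_mul, ← pow_succ'] at this
    calc vnormA A (R x) ^ 2 ^ (n+1) = (vnormA A (R x) ^ 2 ^ n) ^ 2 := e1
    _ ≤ (vnormA A ((R ^ 2 ^ n) x) * vnormA A x ^ (2 ^ n - 1)) ^ 2 := by
        apply pow_le_pow_left₀ (pow_nonneg (vnormA_nonneg _) _) ih
    _ = vnormA A ((R ^ 2 ^ n) x) ^ 2 * (vnormA A x ^ (2 ^ n - 1)) ^ 2 := mul_pow _ _ _
    _ ≤ (vnormA A ((R ^ 2 ^ (n+1)) x) * vnormA A x) * (vnormA A x ^ (2 ^ n - 1)) ^ 2 := by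
        apply mul_le_mul_of_nonneg_right step (by positivity)
    _ = vnormA A ((R ^ 2 ^ (n+1)) x) * vnormA A x ^ (2 ^ (n+1) - 1) := by
        rw [← pow_mul, mul_assoc, ← pow_succ']
        congr 2
        omega

lemma key3 (hA : A.IsPositive) {R : H →L[ℂ] H} (hR : IsAAdjoint A R R) (x : H) :
    vnormA A (R x) ≤ ‖R‖ * vnormA A x := by
  by_cases hx : vnormA A x = 0
  · have h2 := key2 hA hR 1 x
    simp only [pow_one, hx] at h2
    norm_num at h2
    have h3 : vnormA A (R x) ^ 2 ≤ 0 := by simpa [hx] using h2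
    have h4 : vnormA A (R x) = 0 := by nlinarith [vnormA_nonneg (A := A) (R x)]
    rw [h4, hx, mul_zero]
  · have hx' : 0 < vnormA A x := lt_of_le_of_ne (vnormA_nonneg x) (Ne.symm hx)
    by_cases hR0 : ‖R‖ = 0
    · have : R = 0 := norm_eq_zero.mp hR0
      rw [this]
      simp only [ContinuousLinearMap.zero_apply]
      rw [vnormA_zero]
      positivity
    have hRpos : 0 < ‖R‖ := lt_of_le_of_ne (norm_nonneg R) (Ne.symm hR0)
    by_contra hcon
    push_neg at hcon
    set t : ℝ := vnormA A (R x) / (‖R‖ * vnormA A x) with ht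
    have ht1 : 1 < t := (one_lt_div (by positivity)).2 hcon
    set C : ℝ := Real.sqrt ‖A‖ * ‖x‖ / vnormA A x with hC
    have hbound : ∀ n : ℕ, t ^ (2 ^ n) ≤ C := by
      intro n
      have h2 := key2 hA hR n x
      set k : ℕ := 2 ^ n - 1 with hk
      have hk1 : 2 ^ n = k + 1 := by
        have : 1 ≤ 2 ^ n := Nat.one_le_two_pow
        omega
      have h3 : vnormA A ((R ^ (2 ^ n)) x) ≤ Real.sqrt ‖A‖ * (‖R‖ ^ (2 ^ n) * ‖x‖) := by
        refine (vnormA_le_norm hA _).trans ?_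
        have h4 : ‖(R ^ (2 ^ n)) x‖ ≤ ‖R ^ (2 ^ n)‖ * ‖x‖ := (R ^ (2^n)).le_opNorm x
        have h5 : ‖R ^ (2 ^ n)‖ ≤ ‖R‖ ^ (2 ^ n) := norm_pow_le' R (Nat.pos_of_ne_zero (by positivity))
        refine mul_le_mul_of_nonneg_left ?_ (Real.sqrt_nonneg ‖A‖)
        exact h4.trans (mul_le_mul_of_nonneg_right h5 (norm_nonneg x))
      rw [ht, div_pow, div_le_iff₀ (by positivity), hC]
      have expand : Real.sqrt ‖A‖ * ‖x‖ / vnormA A x * (‖R‖ * vnormA A x) ^ 2 ^ n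
          = Real.sqrt ‖A‖ * (‖R‖ ^ (2 ^ n) * ‖x‖) * vnormA A x ^ k := by
        rw [mul_pow, hk1]
        field_simp
        ring
      rw [expand]
      calc vnormA A (R x) ^ 2 ^ n ≤ vnormA A ((R ^ (2 ^ n)) x) * vnormA A x ^ k := h2
      _ ≤ Real.sqrt ‖A‖ * (‖R‖ ^ (2 ^ n) * ‖x‖) * vnormA A x ^ k := by
          apply mul_le_mul_of_nonneg_right h3 (by positivity)
    obtain ⟨n, hn⟩ := pow_unbounded_of_one_lt C ht1
    have h6 : t ^ n ≤ t ^ (2 ^ n) :=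
      pow_le_pow_right₀ ht1.le (Nat.le_of_lt (Nat.lt_two_pow_self))
    linarith [hbound n]

lemma key4 (hA : A.IsPositive) {T Ts : H →L[ℂ] H} (hT : IsAAdjoint A T Ts) (x : H) :
    vnormA A (T x) ≤ Real.sqrt ‖Ts * T‖ * vnormA A x := by
  have hself : IsAAdjoint A (Ts * T) (Ts * T) := by
    show A * (Ts * T) = adjoint (Ts * T) * A
    have h1 : A * Ts = adjoint T * A := hT
    have h2 : A * T = adjoint Ts * A := isAAdjoint_symm hA hT
    calc A * (Ts * T) = (A * Ts) * T := by rw [mul_assoc]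
    _ = adjoint T * (A * T) := by rw [h1, mul_assoc]
    _ = adjoint T * (adjoint Ts * A) := by rw [h2]
    _ = (adjoint T * adjoint Ts) * A := by rw [mul_assoc]
    _ = adjoint (Ts * T) * A := by
        rw [← star_eq_adjoint, ← star_eq_adjoint, ← star_eq_adjoint, ← star_mul]
  have h1 : vnormA A (T x) ^ 2 = (innA A x ((Ts * T) x)).re := by
    rw [vnormA_sq hA]
    congr 1
    rw [isAAdjoint_apply hA hT x (T x)]; rfl
  have h2 : (innA A x ((Ts * T) x)).re ≤ vnormA A x * (‖Ts * T‖ * vnormA A x) :=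
    (re_innA_le hA x _).trans
      (mul_le_mul_of_nonneg_left (key3 hA hself x) (vnormA_nonneg x))
  have h3 : vnormA A (T x) ^ 2 ≤ ‖Ts * T‖ * vnormA A x ^ 2 := by
    rw [h1]; nlinarith [h2]
  have h4 := Real.sqrt_le_sqrt h3
  rwa [Real.sqrt_sq (vnormA_nonneg _), Real.sqrt_mul (norm_nonneg _),
    Real.sqrt_sq (vnormA_nonneg _)] at h4


-- part 4
lemma opnormA_nonneg (T : H →L[ℂ] H) : 0 ≤ opnormA A T :=
  Real.sSup_nonneg (by rintro r ⟨x, hx, rfl⟩; exact vnormA_nonneg _)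

lemma wA_nonneg (T : H →L[ℂ] H) : 0 ≤ wA A T :=
  Real.sSup_nonneg (by rintro r ⟨x, hx, rfl⟩; exact norm_nonneg _)

lemma opnormA_le {T : H →L[ℂ] H} {c : ℝ} (hc : 0 ≤ c)
    (h : ∀ x : H, vnormA A x = 1 → vnormA A (T x) ≤ c) : opnormA A T ≤ c :=
  Real.sSup_le (by rintro r ⟨x, hx, rfl⟩; exact h x hx) hc

lemma wA_le {T : H →L[ℂ] H} {c : ℝ} (hc : 0 ≤ c)
    (h : ∀ x : H, vnormA A x = 1 → ‖innA A (T x) x‖ ≤ c) : wA A T ≤ c :=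
  Real.sSup_le (by rintro r ⟨x, hx, rfl⟩; exact h x hx) hc

lemma vnormA_unit (hA : A.IsPositive) {x : H} (hx : vnormA A x ≠ 0) :
    vnormA A ((((vnormA A x)⁻¹ : ℝ) : ℂ) • x) = 1 := by
  rw [vnormA_smul hA, Complex.norm_real, Real.norm_eq_abs,
    _root_.abs_of_nonneg (inv_nonneg.2 (vnormA_nonneg x)), inv_mul_cancel₀ hx]

lemma le_opnormA (hA : A.IsPositive) {T Ts : H →L[ℂ] H} (hT : IsAAdjoint A T Ts) (x : H) :
    vnormA A (T x) ≤ opnormA A T * vnormA A x := by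
  by_cases hx : vnormA A x = 0
  · have h1 := key4 hA hT x
    rw [hx, mul_zero] at h1
    have h2 : vnormA A (T x) = 0 := le_antisymm h1 (vnormA_nonneg _)
    rw [h2, hx, mul_zero]
  · have hx' : 0 < vnormA A x := lt_of_le_of_ne (vnormA_nonneg x) (Ne.symm hx)
    have hbdd : BddAbove {r : ℝ | ∃ y : H, vnormA A y = 1 ∧ r = vnormA A (T y)} := by
      refine ⟨Real.sqrt ‖Ts * T‖, ?_⟩
      rintro r ⟨y, hy, rfl⟩
      have := key4 hA hT y
      rwa [hy, mul_one] at this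
    have hmem : vnormA A (T ((((vnormA A x)⁻¹ : ℝ) : ℂ) • x))
        ∈ {r : ℝ | ∃ y : H, vnormA A y = 1 ∧ r = vnormA A (T y)} :=
      ⟨_, vnormA_unit hA hx, rfl⟩
    have h2 := le_csSup hbdd hmem
    rw [map_smul, vnormA_smul hA, Complex.norm_real, Real.norm_eq_abs,
      _root_.abs_of_nonneg (inv_nonneg.2 (vnormA_nonneg x))] at h2
    rw [show opnormA A T * vnormA A x = vnormA A x * opnormA A T from mul_comm _ _,
      ← inv_mul_le_iff₀ hx']
    exact h2

lemma le_wA (hA : A.IsPositive) {T Ts : H →L[ℂ] H} (hT : IsAAdjoint A T Ts) (x : H) :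
    ‖innA A (T x) x‖ ≤ wA A T * vnormA A x ^ 2 := by
  by_cases hx : vnormA A x = 0
  · have h1 : ‖innA A (T x) x‖ ≤ vnormA A (T x) * vnormA A x := innA_abs_le hA _ _
    rw [hx, mul_zero] at h1
    have := norm_nonneg (innA A (T x) x)
    rw [hx]
    nlinarith
  · have hx' : 0 < vnormA A x := lt_of_le_of_ne (vnormA_nonneg x) (Ne.symm hx)
    have hbdd : BddAbove {r : ℝ | ∃ y : H, vnormA A y = 1 ∧ r = ‖innA A (T y) y‖} := by
      refine ⟨Real.sqrt ‖Ts * T‖, ?_⟩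
      rintro r ⟨y, hy, rfl⟩
      have h1 : ‖innA A (T y) y‖ ≤ vnormA A (T y) * vnormA A y := innA_abs_le hA _ _
      have h2 := key4 hA hT y
      rw [hy, mul_one] at h1 h2
      exact h1.trans h2
    set c : ℂ := (((vnormA A x)⁻¹ : ℝ) : ℂ) with hc
    have hmem : ‖innA A (T (c • x)) (c • x)‖
        ∈ {r : ℝ | ∃ y : H, vnormA A y = 1 ∧ r = ‖innA A (T y) y‖} :=
      ⟨_, vnormA_unit hA hx, rfl⟩
    have h2 := le_csSup hbdd hmem
    rw [map_smul, innA_smul_left, innA_smul_right, norm_mul, norm_mul] at h2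
    have habs : ‖c‖ = (vnormA A x)⁻¹ := by
      rw [hc, Complex.norm_real, Real.norm_eq_abs, _root_.abs_of_nonneg (inv_nonneg.2 (vnormA_nonneg x))]
    rw [Complex.norm_conj, habs] at h2
    -- h2 : vx⁻¹ * (vx⁻¹ * abs) ≤ wA A T
    have h3 : ‖innA A (T x) x‖ = vnormA A x ^ 2 * ((vnormA A x)⁻¹ * ((vnormA A x)⁻¹ * ‖innA A (T x) x‖)) := by
      field_simp
    rw [h3]
    calc vnormA A x ^ 2 * ((vnormA A x)⁻¹ * ((vnormA A x)⁻¹ * ‖innA A (T x) x‖))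
        ≤ vnormA A x ^ 2 * wA A T := by
          apply mul_le_mul_of_nonneg_left h2 (by positivity)
    _ = wA A T * vnormA A x ^ 2 := mul_comm _ _

lemma wopn_unit (hA : A.IsPositive) {P : H →L[ℂ] H} (hP : IsAAdjoint A P P) {x : H}
    (hx : vnormA A x = 1) : vnormA A (P x) ≤ wA A P := by
  have claim : ∀ y z : H, (innA A (P y) z).re
      ≤ wA A P / 2 * (vnormA A y ^ 2 + vnormA A z ^ 2) := by
    intro y z
    have hq : ∀ u : H, |(innA A (P u) u).re| ≤ wA A P * vnormA A u ^ 2 := fun u =>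
      (Complex.abs_re_le_norm _).trans (le_wA hA hP u)
    have h1 : innA A (P z) y = starRingEnd ℂ (innA A (P y) z) := by
      rw [isAAdjoint_apply hA hP z y, innA_conj hA]
    have hpol : (innA A (P (y+z)) (y+z)).re - (innA A (P (y-z)) (y-z)).re
        = 4 * (innA A (P y) z).re := by
      simp only [map_add, map_sub, innA_add_left, innA_add_right, innA_sub_left,
        innA_sub_right, h1]
      simp only [Complex.add_re, Complex.sub_re, Complex.conj_re]
      ring
    have hpar : vnormA A (y+z) ^ 2 + vnormA A (y-z) ^ 2
        = 2 * (vnormA A y ^ 2 + vnormA A z ^ 2) := by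
      rw [vnormA_sq hA, vnormA_sq hA, vnormA_sq hA, vnormA_sq hA]
      simp only [innA_add_left, innA_add_right, innA_sub_left, innA_sub_right,
        Complex.add_re, Complex.sub_re]
      ring
    have a1 := abs_le.mp (hq (y+z))
    have a2 := abs_le.mp (hq (y-z))
    nlinarith [a1.2, a2.1, hpol, hpar, wA_nonneg (A := A) P]
  by_cases hPx : vnormA A (P x) = 0
  · rw [hPx]; exact wA_nonneg P
  · set z : H := (((vnormA A (P x))⁻¹ : ℝ) : ℂ) • P x with hzdef
    have hz1 : vnormA A z = 1 := vnormA_unit hA hPx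
    have hre : (innA A (P x) z).re = vnormA A (P x) := by
      rw [hzdef, innA_smul_right, Complex.re_ofReal_mul, ← vnormA_sq hA, sq]
      field_simp
    have := claim x z
    rw [hre, hz1, hx] at this
    linarith


-- part 5
lemma PQ_identity (T Ts : H →L[ℂ] H) :
    (ReA T Ts + ImA T Ts) * (ReA T Ts + ImA T Ts)
      + (ReA T Ts - ImA T Ts) * (ReA T Ts - ImA T Ts) = Ts * T + T * Ts := by
  have hd : ((2*Complex.I)⁻¹ : ℂ) = -Complex.I/2 := by
    field_simp; ring_nf; simp [Complex.I_sq]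
  simp only [ReA, ImA, hd, add_mul, mul_add, sub_mul, mul_sub, smul_mul_smul_comm]
  match_scalars <;> simp [Complex.ext_iff] <;> norm_num

lemma isAAdjoint_P (hA : A.IsPositive) {T Ts : H →L[ℂ] H} (hT : IsAAdjoint A T Ts) :
    IsAAdjoint A (ReA T Ts + ImA T Ts) (ReA T Ts + ImA T Ts) := by
  have h1 : A * T = star Ts * A := by
    rw [star_eq_adjoint]; exact isAAdjoint_symm hA hT
  have h2 : A * Ts = star T * A := by rw [star_eq_adjoint]; exact hT
  have hd : ((2*Complex.I)⁻¹ : ℂ) = -Complex.I/2 := by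
    field_simp; ring_nf; simp [Complex.I_sq]
  show A * (ReA T Ts + ImA T Ts) = adjoint (ReA T Ts + ImA T Ts) * A
  rw [← star_eq_adjoint]
  simp only [ReA, ImA, hd, mul_add, add_mul, mul_sub, sub_mul, mul_smul_comm, smul_mul_assoc,
    star_add, star_sub, star_smul, h1, h2, Complex.star_def, map_inv₀, map_div₀, map_neg,
    Complex.conj_I, map_ofNat]
  match_scalars <;> simp [Complex.ext_iff] <;> norm_num

lemma isAAdjoint_Q (hA : A.IsPositive) {T Ts : H →L[ℂ] H} (hT : IsAAdjoint A T Ts) :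
    IsAAdjoint A (ReA T Ts - ImA T Ts) (ReA T Ts - ImA T Ts) := by
  have h1 : A * T = star Ts * A := by
    rw [star_eq_adjoint]; exact isAAdjoint_symm hA hT
  have h2 : A * Ts = star T * A := by rw [star_eq_adjoint]; exact hT
  have hd : ((2*Complex.I)⁻¹ : ℂ) = -Complex.I/2 := by
    field_simp; ring_nf; simp [Complex.I_sq]
  show A * (ReA T Ts - ImA T Ts) = adjoint (ReA T Ts - ImA T Ts) * A
  rw [← star_eq_adjoint]
  simp only [ReA, ImA, hd, mul_add, add_mul, mul_sub, sub_mul, mul_smul_comm, smul_mul_assoc,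
    star_add, star_sub, star_smul, h1, h2, Complex.star_def, map_inv₀, map_div₀, map_neg,
    Complex.conj_I, map_ofNat]
  match_scalars <;> simp [Complex.ext_iff] <;> norm_num

lemma abs_one_add_I_div_two : ‖(1 + Complex.I)/2‖ = Real.sqrt 2 / 2 := by
  rw [norm_div]
  have h1 : ‖1 + Complex.I‖ = Real.sqrt 2 := by
    rw [Complex.norm_def]
    norm_num [Complex.normSq_apply]
  have h2 : ‖(2 : ℂ)‖ = 2 := by norm_num
  rw [h1, h2]

lemma abs_one_sub_I_div_two : ‖(1 - Complex.I)/2‖ = Real.sqrt 2 / 2 := by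
  rw [norm_div]
  have h1 : ‖1 - Complex.I‖ = Real.sqrt 2 := by
    rw [Complex.norm_def]
    norm_num [Complex.normSq_apply]
  have h2 : ‖(2 : ℂ)‖ = 2 := by norm_num
  rw [h1, h2]

lemma wA_P_le (hA : A.IsPositive) {T Ts : H →L[ℂ] H} (hT : IsAAdjoint A T Ts) :
    wA A (ReA T Ts + ImA T Ts) ≤ Real.sqrt 2 * wA A T := by
  refine wA_le (mul_nonneg (Real.sqrt_nonneg 2) (wA_nonneg T)) (fun x hx => ?_)
  have hz : innA A (Ts x) x = starRingEnd ℂ (innA A (T x) x) := by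
    rw [isAAdjoint_apply hA (isAAdjoint_symm hA hT) x x, innA_conj hA]
  have hd : ((2*Complex.I)⁻¹ : ℂ) = -Complex.I/2 := by
    field_simp; ring_nf; simp [Complex.I_sq]
  have hPx : innA A ((ReA T Ts + ImA T Ts) x) x
      = ((1+Complex.I)/2) * innA A (T x) x
        + starRingEnd ℂ (((1+Complex.I)/2) * innA A (T x) x) := by
    simp only [ReA, ImA, hd, ContinuousLinearMap.add_apply, ContinuousLinearMap.smul_apply,
      ContinuousLinearMap.sub_apply, innA_add_left, innA_sub_left, innA_smul_left, hz,
      map_mul, map_div₀, map_add, map_inv₀, map_neg, Complex.conj_I, map_ofNat, map_one,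
      Complex.conj_conj]
    ring
  rw [hPx, Complex.add_conj, Complex.norm_real, Real.norm_eq_abs]
  have h1 : |2 * (((1+Complex.I)/2) * innA A (T x) x).re|
      ≤ 2 * ‖((1+Complex.I)/2) * innA A (T x) x‖ := by
    rw [abs_mul, show |(2:ℝ)| = 2 by norm_num]
    exact mul_le_mul_of_nonneg_left (Complex.abs_re_le_norm _) (by norm_num)
  refine h1.trans ?_
  rw [norm_mul, abs_one_add_I_div_two]
  have h2 : ‖innA A (T x) x‖ ≤ wA A T := by
    have := le_wA hA hT x
    rwa [hx, one_pow, mul_one] at this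
  calc 2 * (Real.sqrt 2 / 2 * ‖innA A (T x) x‖)
      = Real.sqrt 2 * ‖innA A (T x) x‖ := by ring
  _ ≤ Real.sqrt 2 * wA A T := mul_le_mul_of_nonneg_left h2 (Real.sqrt_nonneg 2)

lemma wA_Q_le (hA : A.IsPositive) {T Ts : H →L[ℂ] H} (hT : IsAAdjoint A T Ts) :
    wA A (ReA T Ts - ImA T Ts) ≤ Real.sqrt 2 * wA A T := by
  refine wA_le (mul_nonneg (Real.sqrt_nonneg 2) (wA_nonneg T)) (fun x hx => ?_)
  have hz : innA A (Ts x) x = starRingEnd ℂ (innA A (T x) x) := by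
    rw [isAAdjoint_apply hA (isAAdjoint_symm hA hT) x x, innA_conj hA]
  have hd : ((2*Complex.I)⁻¹ : ℂ) = -Complex.I/2 := by
    field_simp; ring_nf; simp [Complex.I_sq]
  have hPx : innA A ((ReA T Ts - ImA T Ts) x) x
      = ((1-Complex.I)/2) * innA A (T x) x
        + starRingEnd ℂ (((1-Complex.I)/2) * innA A (T x) x) := by
    simp only [ReA, ImA, hd, ContinuousLinearMap.add_apply, ContinuousLinearMap.smul_apply,
      ContinuousLinearMap.sub_apply, innA_add_left, innA_sub_left, innA_smul_left, hz,
      map_mul, map_div₀, map_add, map_sub, map_inv₀, map_neg, Complex.conj_I, map_ofNat,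
      map_one, Complex.conj_conj]
    ring
  rw [hPx, Complex.add_conj, Complex.norm_real, Real.norm_eq_abs]
  have h1 : |2 * (((1-Complex.I)/2) * innA A (T x) x).re|
      ≤ 2 * ‖((1-Complex.I)/2) * innA A (T x) x‖ := by
    rw [abs_mul, show |(2:ℝ)| = 2 by norm_num]
    exact mul_le_mul_of_nonneg_left (Complex.abs_re_le_norm _) (by norm_num)
  refine h1.trans ?_
  rw [norm_mul, abs_one_sub_I_div_two]
  have h2 : ‖innA A (T x) x‖ ≤ wA A T := by
    have := le_wA hA hT x
    rwa [hx, one_pow, mul_one] at this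
  calc 2 * (Real.sqrt 2 / 2 * ‖innA A (T x) x‖)
      = Real.sqrt 2 * ‖innA A (T x) x‖ := by ring
  _ ≤ Real.sqrt 2 * wA A T := mul_le_mul_of_nonneg_left h2 (Real.sqrt_nonneg 2)

lemma le_opnormA_adj (hA : A.IsPositive) {S Ss : H →L[ℂ] H} (hS : IsAAdjoint A S Ss) (x : H) :
    vnormA A (Ss x) ≤ opnormA A S * vnormA A x := by
  have h1 : vnormA A (Ss x) ^ 2 = (innA A x (S (Ss x))).re := by
    rw [vnormA_sq hA, isAAdjoint_apply hA (isAAdjoint_symm hA hS) x (Ss x)]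
  have h2 : (innA A x (S (Ss x))).re ≤ vnormA A x * (opnormA A S * vnormA A (Ss x)) :=
    (re_innA_le hA _ _).trans
      (mul_le_mul_of_nonneg_left (le_opnormA hA hS (Ss x)) (vnormA_nonneg x))
  by_cases h0 : vnormA A (Ss x) = 0
  · rw [h0]; exact mul_nonneg (opnormA_nonneg S) (vnormA_nonneg x)
  · have h3 : 0 < vnormA A (Ss x) := lt_of_le_of_ne (vnormA_nonneg _) (Ne.symm h0)
    nlinarith [h1, h2]


theorem stmt17 (A T Ts S Ss : H →L[ℂ] H) (hA : A.IsPositive)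
    (hT : IsAAdjoint A T Ts) (hS : IsAAdjoint A S Ss) :
    wA A (T.comp S + S.comp T) ≤
        2 * Real.sqrt 2 * opnormA A S *
          Real.sqrt (wA A T ^ 2 -
            |opnormA A (ReA T Ts + ImA T Ts) ^ 2 - opnormA A (ReA T Ts - ImA T Ts) ^ 2| / 4) ∧
      wA A (T.comp S - S.comp T) ≤
        2 * Real.sqrt 2 * opnormA A S *
          Real.sqrt (wA A T ^ 2 -
            |opnormA A (ReA T Ts + ImA T Ts) ^ 2 - opnormA A (ReA T Ts - ImA T Ts) ^ 2| / 4) := by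
  have hP : IsAAdjoint A (ReA T Ts + ImA T Ts) (ReA T Ts + ImA T Ts) := isAAdjoint_P hA hT
  have hQ : IsAAdjoint A (ReA T Ts - ImA T Ts) (ReA T Ts - ImA T Ts) := isAAdjoint_Q hA hT
  set P : H →L[ℂ] H := ReA T Ts + ImA T Ts with hPdef
  set Q : H →L[ℂ] H := ReA T Ts - ImA T Ts with hQdef
  set w : ℝ := wA A T with hwdef
  set nS : ℝ := opnormA A S with hnSdef
  set nP : ℝ := opnormA A P with hnPdef
  set nQ : ℝ := opnormA A Q with hnQdef
  set D : ℝ := |nP ^ 2 - nQ ^ 2| with hDdef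
  have hw0 : 0 ≤ w := wA_nonneg T
  have hnS0 : 0 ≤ nS := opnormA_nonneg S
  have hnP0 : 0 ≤ nP := opnormA_nonneg P
  have hnQ0 : 0 ≤ nQ := opnormA_nonneg Q
  have hsq2 : Real.sqrt 2 ^ 2 = 2 := Real.sq_sqrt (by norm_num)
  -- bounds on nP, nQ
  have bPw : nP ≤ Real.sqrt 2 * w := by
    refine (opnormA_le (wA_nonneg P) (fun y hy => wopn_unit hA hP hy)).trans ?_
    exact wA_P_le hA hT
  have bQw : nQ ≤ Real.sqrt 2 * w := by
    refine (opnormA_le (wA_nonneg Q) (fun y hy => wopn_unit hA hQ hy)).trans ?_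
    exact wA_Q_le hA hT
  have hnP2 : nP ^ 2 ≤ 2 * w ^ 2 := by nlinarith [Real.sqrt_nonneg 2]
  have hnQ2 : nQ ^ 2 ≤ 2 * w ^ 2 := by nlinarith [Real.sqrt_nonneg 2]
  have hD4 : 0 ≤ w ^ 2 - D / 4 := by
    rcases abs_cases (nP ^ 2 - nQ ^ 2) with ⟨h, _⟩ | ⟨h, _⟩ <;>
      rw [hDdef, h] <;> nlinarith [sq_nonneg nP, sq_nonneg nQ]
  have hRHS0 : 0 ≤ 2 * Real.sqrt 2 * nS * Real.sqrt (w ^ 2 - D / 4) := by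
    have := Real.sqrt_nonneg (w ^ 2 - D / 4)
    have := Real.sqrt_nonneg 2
    positivity
  -- core estimate
  have core : ∀ x : H, vnormA A x = 1 →
      ‖innA A (T (S x)) x‖ + ‖innA A (S (T x)) x‖
        ≤ 2 * Real.sqrt 2 * nS * Real.sqrt (w ^ 2 - D / 4) := by
    intro x hx
    have t1 : ‖innA A (T (S x)) x‖ ≤ nS * vnormA A (Ts x) := by
      rw [isAAdjoint_apply hA hT (S x) x]
      refine (innA_abs_le hA _ _).trans ?_
      have h := le_opnormA hA hS x
      rw [hx, mul_one] at h
      exact mul_le_mul_of_nonneg_right h (vnormA_nonneg _)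
    have t2 : ‖innA A (S (T x)) x‖ ≤ vnormA A (T x) * nS := by
      rw [isAAdjoint_apply hA hS (T x) x]
      refine (innA_abs_le hA _ _).trans ?_
      have h := le_opnormA_adj hA hS x
      rw [hx, mul_one] at h
      exact mul_le_mul_of_nonneg_left h (vnormA_nonneg _)
    -- the identity ‖Tx‖² + ‖Tsx‖² = ‖Px‖² + ‖Qx‖²
    have hsq : vnormA A (T x) ^ 2 + vnormA A (Ts x) ^ 2
        = vnormA A (P x) ^ 2 + vnormA A (Q x) ^ 2 := by
      have e1 : innA A ((Ts * T) x) x = innA A (T x) (T x) :=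
        isAAdjoint_apply hA (isAAdjoint_symm hA hT) (T x) x
      have e2 : innA A ((T * Ts) x) x = innA A (Ts x) (Ts x) :=
        isAAdjoint_apply hA hT (Ts x) x
      have e3 : innA A ((P * P) x) x = innA A (P x) (P x) :=
        isAAdjoint_apply hA hP (P x) x
      have e4 : innA A ((Q * Q) x) x = innA A (Q x) (Q x) :=
        isAAdjoint_apply hA hQ (Q x) x
      have e5 : innA A ((P * P) x) x + innA A ((Q * Q) x) x
          = innA A ((Ts * T) x) x + innA A ((T * Ts) x) x := by
        rw [← innA_add_left, ← innA_add_left, ← ContinuousLinearMap.add_apply,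
          ← ContinuousLinearMap.add_apply, PQ_identity]
      rw [e1, e2, e3, e4] at e5
      have e6 := congrArg Complex.re e5
      simp only [Complex.add_re] at e6
      rw [vnormA_sq hA, vnormA_sq hA, vnormA_sq hA, vnormA_sq hA]
      linarith
    have bP : vnormA A (P x) ≤ nP := by
      have := le_opnormA hA hP x; rwa [hx, mul_one] at this
    have bQ : vnormA A (Q x) ≤ nQ := by
      have := le_opnormA hA hQ x; rwa [hx, mul_one] at this
    have s2 : vnormA A (T x) ^ 2 + vnormA A (Ts x) ^ 2 ≤ nP ^ 2 + nQ ^ 2 := by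
      rw [hsq]
      have := pow_le_pow_left₀ (vnormA_nonneg (P x)) bP 2
      have := pow_le_pow_left₀ (vnormA_nonneg (Q x)) bQ 2
      linarith
    have s3 : nP ^ 2 + nQ ^ 2 ≤ 4 * w ^ 2 - D := by
      rcases abs_cases (nP ^ 2 - nQ ^ 2) with ⟨h, _⟩ | ⟨h, _⟩ <;> rw [hDdef, h] <;> linarith
    have s4 : (vnormA A (Ts x) + vnormA A (T x)) ^ 2 ≤ 8 * (w ^ 2 - D / 4) := by
      nlinarith [sq_nonneg (vnormA A (Ts x) - vnormA A (T x)), s2, s3]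
    have s5 : vnormA A (Ts x) + vnormA A (T x)
        ≤ 2 * Real.sqrt 2 * Real.sqrt (w ^ 2 - D / 4) := by
      have h0 : 0 ≤ vnormA A (Ts x) + vnormA A (T x) :=
        add_nonneg (vnormA_nonneg _) (vnormA_nonneg _)
      have h1 : vnormA A (Ts x) + vnormA A (T x) ≤ Real.sqrt (8 * (w ^ 2 - D / 4)) := by
        rw [← Real.sqrt_sq h0]
        exact Real.sqrt_le_sqrt s4
      have h8 : Real.sqrt 8 = 2 * Real.sqrt 2 := by
        rw [show (8 : ℝ) = 2 ^ 2 * 2 by norm_num, Real.sqrt_mul (by positivity),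
          Real.sqrt_sq (by norm_num)]
      rwa [Real.sqrt_mul (by norm_num : (0:ℝ) ≤ 8), h8] at h1
    calc ‖innA A (T (S x)) x‖ + ‖innA A (S (T x)) x‖
        ≤ nS * (vnormA A (Ts x) + vnormA A (T x)) := by
          rw [mul_add]; rw [mul_comm (vnormA A (T x)) nS] at t2; linarith
    _ ≤ nS * (2 * Real.sqrt 2 * Real.sqrt (w ^ 2 - D / 4)) :=
        mul_le_mul_of_nonneg_left s5 hnS0
    _ = 2 * Real.sqrt 2 * nS * Real.sqrt (w ^ 2 - D / 4) := by ring
  constructor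
  · refine wA_le hRHS0 (fun x hx => ?_)
    have e : innA A ((T.comp S + S.comp T) x) x
        = innA A (T (S x)) x + innA A (S (T x)) x := by
      rw [ContinuousLinearMap.add_apply, innA_add_left]; rfl
    rw [e]
    exact (norm_add_le _ _).trans (core x hx)
  · refine wA_le hRHS0 (fun x hx => ?_)
    have e : innA A ((T.comp S - S.comp T) x) x
        = innA A (T (S x)) x - innA A (S (T x)) x := by
      rw [ContinuousLinearMap.sub_apply, innA_sub_left]; rfl
    rw [e]
    refine le_trans ?_ (core x hx)
    have : ‖innA A (T (S x)) x - innA A (S (T x)) x‖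
        = ‖innA A (T (S x)) x + -(innA A (S (T x)) x)‖ := by rw [sub_eq_add_neg]
    rw [this]
    refine (norm_add_le _ _).trans ?_
    rw [norm_neg]
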